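/- Let N be a nonnegative-integer-valued random variable whose probability generating structure is Poisson with random parameter Y (a randomized Poisson), and let X₁, X₂, ... be i.i.d. random vectors in ℝⁿ independent of N, with joint moment EGF G(t) = E[exp(X·tᵀ)]. Then the moment EGF of the random sum S_N = X₁+...+X_N equals f_Y(G(t) − 1), where f_Y(s) = E[e^{Ys}] is the moment EGF of Y. Consequently, the i-th joint moment of S_N equals Σ_{λ ⊨⊨ i} (i!/(m(λ)! λ!)) E[Y^{ℓ(λ)}] g_λ, summing over partitions λ of the multi-index i, with g_λ the product of joint moments of X₁ indexed by the parts of λ. -/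

import Mathlib

open Nat MeasureTheory

lemma ptwise (q : ℕ) (y : ℝ) :
    HasSum (fun m : ℕ => (m.choose q : ℝ) * (Real.exp (-y) * y ^ m / (m ! : ℝ)))
      (Real.exp (-y) * Real.exp y * y ^ q / (q ! : ℝ)) := by
  have he : HasSum (fun r : ℕ => y ^ r / (r ! : ℝ)) (Real.exp y) := by
    rw [Real.exp_eq_exp_ℝ]; exact NormedSpace.expSeries_div_hasSum_exp y
  have h2 := he.mul_left (Real.exp (-y) * y ^ q / (q ! : ℝ))
  have h3 : ∀ r : ℕ, ((r + q).choose q : ℝ) * (Real.exp (-y) * y ^ (r + q) / ((r + q)! : ℝ))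
      = (Real.exp (-y) * y ^ q / (q ! : ℝ)) * (y ^ r / (r ! : ℝ)) := by
    intro r
    have h0 : (q:ℕ) ≤ r + q := Nat.le_add_left _ _
    rw [Nat.cast_choose ℝ h0]
    have h1 : r + q - q = r := by omega
    rw [h1, pow_add]
    have hq : (q ! : ℝ) ≠ 0 := Nat.cast_ne_zero.2 (Nat.factorial_ne_zero _)
    have hr : (r ! : ℝ) ≠ 0 := Nat.cast_ne_zero.2 (Nat.factorial_ne_zero _)
    have hqr : ((r + q)! : ℝ) ≠ 0 := Nat.cast_ne_zero.2 (Nat.factorial_ne_zero _)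
    field_simp
  have h4 : HasSum (fun r : ℕ => ((r + q).choose q : ℝ) *
      (Real.exp (-y) * y ^ (r + q) / ((r + q)! : ℝ)))
      (Real.exp (-y) * y ^ q / (q ! : ℝ) * Real.exp y) := by
    simpa only [h3] using h2
  have h5 := (hasSum_nat_add_iff (f := fun m : ℕ => (m.choose q : ℝ) *
      (Real.exp (-y) * y ^ m / (m ! : ℝ))) q).mp h4
  have h6 : ∑ i ∈ Finset.range q, ((i.choose q : ℝ) *
      (Real.exp (-y) * y ^ i / (i ! : ℝ))) = 0 := by
    apply Finset.sum_eq_zero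
    intro m hm
    rw [Finset.mem_range] at hm
    rw [Nat.choose_eq_zero_of_lt hm]
    simp
  rw [h6, add_zero] at h5
  convert h5 using 1
  · rfl
  · ring

lemma ptwise' (q : ℕ) (y : ℝ) :
    HasSum (fun m : ℕ => (m.choose q : ℝ) * (Real.exp (-y) * y ^ m / (m ! : ℝ)))
      (y ^ q / (q ! : ℝ)) := by
  have := ptwise q y
  rwa [← Real.exp_add, neg_add_cancel, Real.exp_zero, one_mul] at this

lemma term_nonneg (q m : ℕ) (y : ℝ) (hy : 0 ≤ y) :
    0 ≤ (m.choose q : ℝ) * (Real.exp (-y) * y ^ m / (m ! : ℝ)) := by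
  positivity

lemma term_le (q m : ℕ) (y : ℝ) (hy : 0 ≤ y) :
    (m.choose q : ℝ) * (Real.exp (-y) * y ^ m / (m ! : ℝ)) ≤ y ^ q / (q ! : ℝ) :=
  le_hasSum (ptwise' q y) m (fun m' _ => term_nonneg q m' y hy)

lemma HSq {Ω : Type*} [MeasurableSpace Ω] (ℙ : Measure Ω) [IsProbabilityMeasure ℙ]
    (Y : Ω → ℝ) (N : Ω → ℕ) (hYmeas : Measurable Y) (hYpos : ∀ ω, 0 ≤ Y ω)
    (hYint : ∀ p : ℕ, Integrable (fun ω => Y ω ^ p) ℙ)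
    (hmix : ∀ m : ℕ,
      (ℙ {ω | N ω = m}).toReal = ∫ ω, Real.exp (-Y ω) * Y ω ^ m / m ! ∂ℙ)
    (q : ℕ) :
    HasSum (fun m : ℕ => (m.choose q : ℝ) * (ℙ {ω | N ω = m}).toReal)
      ((q ! : ℝ)⁻¹ * ∫ ω, Y ω ^ q ∂ℙ) := by
  classical
  set f : ℕ → Ω → ℝ := fun m ω => (m.choose q : ℝ) * (Real.exp (-Y ω) * Y ω ^ m / (m ! : ℝ))
    with hf
  have hfmeas : ∀ m, Measurable (f m) := by
    intro m
    exact (measurable_const.mul (((hYmeas.neg.exp).mul (hYmeas.pow_const m)).div_const _))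
  have hfnonneg : ∀ m ω, 0 ≤ f m ω := fun m ω => term_nonneg q m _ (hYpos ω)
  have hgint : Integrable (fun ω => Y ω ^ q / (q ! : ℝ)) ℙ := (hYint q).div_const _
  have hfint : ∀ m, Integrable (f m) ℙ := by
    intro m
    refine Integrable.mono' hgint (hfmeas m).aestronglyMeasurable ?_
    filter_upwards with ω
    rw [Real.norm_eq_abs, abs_of_nonneg (hfnonneg m ω)]
    exact term_le q m _ (hYpos ω)
  -- ENNReal route
  have key : ∑' m, ENNReal.ofReal (∫ ω, f m ω ∂ℙ) = ENNReal.ofReal (∫ ω, Y ω ^ q / (q ! : ℝ) ∂ℙ) := by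
    have h1 : ∀ m, ENNReal.ofReal (∫ ω, f m ω ∂ℙ) = ∫⁻ ω, ENNReal.ofReal (f m ω) ∂ℙ := by
      intro m
      exact MeasureTheory.ofReal_integral_eq_lintegral_ofReal (hfint m)
        (Filter.Eventually.of_forall (hfnonneg m))
    have h2 : ∑' m, ∫⁻ ω, ENNReal.ofReal (f m ω) ∂ℙ = ∫⁻ ω, ∑' m, ENNReal.ofReal (f m ω) ∂ℙ :=
      (MeasureTheory.lintegral_tsum (fun m => ((hfmeas m).ennreal_ofReal).aemeasurable)).symm
    have h3 : ∀ ω, ∑' m, ENNReal.ofReal (f m ω) = ENNReal.ofReal (Y ω ^ q / (q ! : ℝ)) := by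
      intro ω
      rw [← ENNReal.ofReal_tsum_of_nonneg (fun m => hfnonneg m ω) (ptwise' q (Y ω)).summable]
      rw [(ptwise' q (Y ω)).tsum_eq]
    simp_rw [h1, h2, h3]
    exact (MeasureTheory.ofReal_integral_eq_lintegral_ofReal hgint
      (Filter.Eventually.of_forall (fun ω => div_nonneg (pow_nonneg (hYpos ω) q) (by positivity)))).symm
  have hIeq : ∀ m, ∫ ω, f m ω ∂ℙ = (m.choose q : ℝ) * (ℙ {ω | N ω = m}).toReal := by
    intro m
    rw [hmix m, ← integral_const_mul]
  have hInonneg : ∀ m, 0 ≤ ∫ ω, f m ω ∂ℙ := fun m => integral_nonneg (hfnonneg m)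
  have hfin : ∑' m, ENNReal.ofReal (∫ ω, f m ω ∂ℙ) ≠ ⊤ := by rw [key]; exact ENNReal.ofReal_ne_top
  have hsummable : Summable (fun m => ∫ ω, f m ω ∂ℙ) := by
    have := ENNReal.summable_toReal hfin
    simpa only [ENNReal.toReal_ofReal (hInonneg _)] using this
  have htsum : ∑' m, ∫ ω, f m ω ∂ℙ = ∫ ω, Y ω ^ q / (q ! : ℝ) ∂ℙ := by
    have h4 := congrArg ENNReal.toReal key
    rw [ENNReal.toReal_ofReal (integral_nonneg (fun ω => div_nonneg (pow_nonneg (hYpos ω) q) (by positivity)))] at h4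
    rw [← h4, ENNReal.tsum_toReal_eq (fun m => ENNReal.ofReal_ne_top)]
    simp_rw [ENNReal.toReal_ofReal (hInonneg _)]
  have final := hsummable.hasSum
  rw [htsum] at final
  have : ∫ ω, Y ω ^ q / (q ! : ℝ) ∂ℙ = (q ! : ℝ)⁻¹ * ∫ ω, Y ω ^ q ∂ℙ := by
    rw [← integral_const_mul]
    congr 1; ext ω; rw [div_eq_inv_mul]
  rw [this] at final
  simpa only [hIeq] using final

lemma alg1 {n : ℕ} (g : (Fin n →₀ ℕ) → ℝ) (G : MvPowerSeries (Fin n) ℝ)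
    (hGdef : ∀ i : Fin n →₀ ℕ,
      MvPowerSeries.coeff i G = (∏ k, ((i k)! : ℝ))⁻¹ * g i)
    (m : ℕ) (i : Fin n →₀ ℕ) :
    ∑ K ∈ Fintype.piFinset (fun k => Finset.piAntidiag (Finset.range m) (i k)),
      (∏ k, (Nat.multinomial (Finset.range m) (K k) : ℝ)) *
        ∏ l ∈ Finset.range m, g (Finsupp.equivFunOnFinite.symm (fun k => K k l)) =
      (∏ k, ((i k)! : ℝ)) * MvPowerSeries.coeff i (G ^ m) := by
  classical
  rw [MvPowerSeries.coeff_pow, Finset.mul_sum]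
  have hmemK : ∀ K ∈ Fintype.piFinset (fun k => Finset.piAntidiag (Finset.range m) (i k)),
      (∀ k, ∑ l ∈ Finset.range m, K k l = i k) ∧ (∀ k l, K k l ≠ 0 → l ∈ Finset.range m) := by
    intro K hK
    rw [Fintype.mem_piFinset] at hK
    exact ⟨fun k => (Finset.mem_piAntidiag.mp (hK k)).1,
      fun k l => (Finset.mem_piAntidiag.mp (hK k)).2 l⟩
  refine Finset.sum_nbij'
    (i := fun K => Finsupp.onFinset (Finset.range m)
      (fun l => if l ∈ Finset.range m then Finsupp.equivFunOnFinite.symm (fun k => K k l) else 0)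
      (fun l h => by
        by_contra hc
        apply h
        show (if l ∈ Finset.range m then Finsupp.equivFunOnFinite.symm (fun k => K k l)
          else (0 : Fin n →₀ ℕ)) = 0
        exact if_neg hc))
    (j := fun d => fun k => fun l => d l k) ?_ ?_ ?_ ?_ ?_
  · -- membership of image
    intro K hK
    obtain ⟨hsum, hsupp⟩ := hmemK K hK
    rw [Finset.mem_finsuppAntidiag]
    refine ⟨?_, Finsupp.support_onFinset_subset⟩
    ext k
    rw [Finset.sum_apply']
    rw [← hsum k]
    refine Finset.sum_congr rfl fun l hl => ?_
    rw [Finsupp.onFinset_apply, if_pos hl]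
    rfl
  · -- membership reverse
    intro d hd
    rw [Finset.mem_finsuppAntidiag] at hd
    rw [Fintype.mem_piFinset]
    intro k
    rw [Finset.mem_piAntidiag]
    constructor
    · rw [← Finset.sum_apply' k, hd.1]
    · intro l hl
      refine hd.2 (Finsupp.mem_support_iff.mpr fun h0 => hl ?_)
      show (d l) k = 0
      rw [h0]; rfl
  · -- left inverse
    intro K hK
    obtain ⟨hsum, hsupp⟩ := hmemK K hK
    funext k l
    show (Finsupp.onFinset _ _ _ : ℕ →₀ (Fin n →₀ ℕ)) l k = K k l
    rw [Finsupp.onFinset_apply]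
    by_cases hl : l ∈ Finset.range m
    · rw [if_pos hl]; rfl
    · rw [if_neg hl]
      show (0 : ℕ) = K k l
      by_contra hne
      exact hl (hsupp k l (fun h => hne h.symm))
  · -- right inverse
    intro d hd
    rw [Finset.mem_finsuppAntidiag] at hd
    ext l k
    rw [Finsupp.onFinset_apply]
    by_cases hl : l ∈ Finset.range m
    · rw [if_pos hl]; rfl
    · rw [if_neg hl]
      have : d l = 0 := by
        by_contra h0
        exact hl (hd.2 (Finsupp.mem_support_iff.mpr h0))
      rw [this]
  · -- term equality
    intro K hK
    obtain ⟨hsum, hsupp⟩ := hmemK K hK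
    have hcoeff : ∀ l ∈ Finset.range m,
        MvPowerSeries.coeff
          ((Finsupp.onFinset (Finset.range m)
            (fun l => if l ∈ Finset.range m then Finsupp.equivFunOnFinite.symm (fun k => K k l) else 0)
            (fun l h => by
              by_contra hc
              apply h
              show (if l ∈ Finset.range m then Finsupp.equivFunOnFinite.symm (fun k => K k l)
                else (0 : Fin n →₀ ℕ)) = 0
              exact if_neg hc) : ℕ →₀ (Fin n →₀ ℕ)) l) G
        = (∏ k, ((K k l)! : ℝ))⁻¹ * g (Finsupp.equivFunOnFinite.symm (fun k => K k l)) := by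
      intro l hl
      rw [Finsupp.onFinset_apply, if_pos hl, hGdef]
      rfl
    rw [Finset.prod_congr rfl hcoeff]
    have hmult : ∀ k, (Nat.multinomial (Finset.range m) (K k) : ℝ)
        = ((i k)! : ℝ) * (∏ l ∈ Finset.range m, ((K k l)! : ℝ))⁻¹ := by
      intro k
      have hspec := Nat.multinomial_spec (Finset.range m) (K k)
      rw [hsum k] at hspec
      have hcast : (∏ l ∈ Finset.range m, ((K k l)! : ℝ)) *
          (Nat.multinomial (Finset.range m) (K k) : ℝ) = ((i k)! : ℝ) := by
        exact_mod_cast congrArg (Nat.cast : ℕ → ℝ) hspec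
      have hne : (∏ l ∈ Finset.range m, ((K k l)! : ℝ)) ≠ 0 :=
        Finset.prod_ne_zero_iff.mpr fun l _ => Nat.cast_ne_zero.2 (Nat.factorial_ne_zero _)
      field_simp
      linarith [hcast]
    rw [Finset.prod_congr rfl (fun k _ => hmult k), Finset.prod_mul_distrib,
      Finset.prod_mul_distrib]
    have hswap : (∏ k : Fin n, (∏ l ∈ Finset.range m, ((K k l)! : ℝ))⁻¹)
        = ∏ l ∈ Finset.range m, (∏ k : Fin n, ((K k l)! : ℝ))⁻¹ := by
      calc (∏ k : Fin n, (∏ l ∈ Finset.range m, ((K k l)! : ℝ))⁻¹)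
          = (∏ k : Fin n, ∏ l ∈ Finset.range m, ((K k l)! : ℝ))⁻¹ := by
            rw [Finset.prod_inv_distrib]
        _ = (∏ l ∈ Finset.range m, ∏ k : Fin n, ((K k l)! : ℝ))⁻¹ := by
            rw [Finset.prod_comm]
        _ = ∏ l ∈ Finset.range m, (∏ k : Fin n, ((K k l)! : ℝ))⁻¹ := by
            rw [Finset.prod_inv_distrib]
    rw [hswap]
    ring

lemma stepA {n : ℕ} {Ω : Type*} [MeasurableSpace Ω] (ℙ : Measure Ω)
    [IsProbabilityMeasure ℙ]
    (N : Ω → ℕ) (X : ℕ → Ω → Fin n → ℝ)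
    (hNmeas : Measurable N)
    (g : (Fin n →₀ ℕ) → ℝ)
    (hXint : ∀ (m : ℕ) (j : ℕ → Fin n →₀ ℕ),
      Integrable (fun ω => ∏ l ∈ Finset.range m, ∏ k, X l ω k ^ j l k) ℙ)
    (hfac : ∀ (m : ℕ) (j : ℕ → Fin n →₀ ℕ),
      ∫ ω in {ω | N ω = m}, ∏ l ∈ Finset.range m, ∏ k, X l ω k ^ j l k ∂ℙ =
        (ℙ {ω | N ω = m}).toReal * ∏ l ∈ Finset.range m, g (j l))
    (G : MvPowerSeries (Fin n) ℝ)
    (hGdef : ∀ i : Fin n →₀ ℕ,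
      MvPowerSeries.coeff i G = (∏ k, ((i k)! : ℝ))⁻¹ * g i)
    (m : ℕ) (i : Fin n →₀ ℕ) :
    ∫ ω in {ω | N ω = m}, ∏ k, (∑ l ∈ Finset.range (N ω), X l ω k) ^ i k ∂ℙ =
      (ℙ {ω | N ω = m}).toReal * ((∏ k, ((i k)! : ℝ)) * MvPowerSeries.coeff i (G ^ m)) := by
  classical
  have hms : MeasurableSet {ω | N ω = m} := hNmeas (measurableSet_singleton m)
  have hEq : Set.EqOn (fun ω => ∏ k, (∑ l ∈ Finset.range (N ω), X l ω k) ^ i k)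
      (fun ω => ∑ K ∈ Fintype.piFinset (fun k => Finset.piAntidiag (Finset.range m) (i k)),
        (∏ k, (Nat.multinomial (Finset.range m) (K k) : ℝ)) *
          ∏ l ∈ Finset.range m, ∏ k, X l ω k ^ K k l)
      {ω | N ω = m} := by
    intro ω hω
    simp only [Set.mem_setOf_eq] at hω
    simp only [hω]
    calc ∏ k, (∑ l ∈ Finset.range m, X l ω k) ^ i k
        = ∏ k, ∑ K ∈ Finset.piAntidiag (Finset.range m) (i k),
            (Nat.multinomial (Finset.range m) K : ℝ) * ∏ l ∈ Finset.range m, X l ω k ^ K l := by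
          refine Finset.prod_congr rfl fun k _ => ?_
          exact Finset.sum_pow_eq_sum_piAntidiag (Finset.range m) (fun l => X l ω k) (i k)
      _ = ∑ K ∈ Fintype.piFinset (fun k => Finset.piAntidiag (Finset.range m) (i k)),
            ∏ k, ((Nat.multinomial (Finset.range m) (K k) : ℝ) *
              ∏ l ∈ Finset.range m, X l ω k ^ K k l) := by
          rw [Finset.prod_univ_sum]
      _ = ∑ K ∈ Fintype.piFinset (fun k => Finset.piAntidiag (Finset.range m) (i k)),
            (∏ k, (Nat.multinomial (Finset.range m) (K k) : ℝ)) *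
              ∏ l ∈ Finset.range m, ∏ k, X l ω k ^ K k l := by
          refine Finset.sum_congr rfl fun K _ => ?_
          rw [Finset.prod_mul_distrib, Finset.prod_comm]
  rw [setIntegral_congr_fun hms hEq]
  rw [integral_finset_sum]
  · have hterm : ∀ K ∈ Fintype.piFinset (fun k => Finset.piAntidiag (Finset.range m) (i k)),
        ∫ ω in {ω | N ω = m},
          (∏ k, (Nat.multinomial (Finset.range m) (K k) : ℝ)) *
            ∏ l ∈ Finset.range m, ∏ k, X l ω k ^ K k l ∂ℙ =
        (∏ k, (Nat.multinomial (Finset.range m) (K k) : ℝ)) *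
          ((ℙ {ω | N ω = m}).toReal *
            ∏ l ∈ Finset.range m, g (Finsupp.equivFunOnFinite.symm (fun k => K k l))) := by
      intro K _
      rw [integral_const_mul]
      congr 1
      exact hfac m (fun l => Finsupp.equivFunOnFinite.symm (fun k => K k l))
    rw [Finset.sum_congr rfl hterm]
    rw [← alg1 g G hGdef m i, Finset.mul_sum]
    refine Finset.sum_congr rfl fun K _ => ?_
    ring
  · intro K _
    refine Integrable.restrict ?_
    exact (hXint m (fun l => Finsupp.equivFunOnFinite.symm (fun k => K k l))).const_mul _

section PS
variable {n : ℕ} (G : MvPowerSeries (Fin n) ℝ)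

lemma ezero (hc : MvPowerSeries.constantCoeff (G - 1) = 0)
    (i : Fin n →₀ ℕ) (q : ℕ) (hq : (∑ k, i k) < q) :
    MvPowerSeries.coeff i ((G - 1) ^ q) = 0 := by
  refine MvPowerSeries.coeff_eq_zero_of_constantCoeff_nilpotent (m := 1) (by rw [pow_one, hc]) ?_
  have hdeg : Finsupp.degree i ≤ ∑ k, i k := by
    unfold Finsupp.degree
    exact Finset.sum_le_sum_of_subset (Finset.subset_univ _)
  omega

lemma binom (hc : MvPowerSeries.constantCoeff (G - 1) = 0)
    (m : ℕ) (i : Fin n →₀ ℕ) :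
    MvPowerSeries.coeff i (G ^ m) =
      ∑ q ∈ Finset.range ((∑ k, i k) + 1),
        (m.choose q : ℝ) * MvPowerSeries.coeff i ((G - 1) ^ q) := by
  classical
  set D := ∑ k, i k with hD
  have h1 : G ^ m = ∑ q ∈ Finset.range (m + 1),
      (G - 1) ^ q * 1 ^ (m - q) * (m.choose q : MvPowerSeries (Fin n) ℝ) := by
    rw [← add_pow (G - 1) 1 m, sub_add_cancel]
  have h2 : MvPowerSeries.coeff i (G ^ m) = ∑ q ∈ Finset.range (m + 1),
      (m.choose q : ℝ) * MvPowerSeries.coeff i ((G - 1) ^ q) := by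
    rw [h1, map_sum]
    refine Finset.sum_congr rfl fun q _ => ?_
    rw [one_pow, mul_one]
    rw [show ((m.choose q : ℕ) : MvPowerSeries (Fin n) ℝ)
        = MvPowerSeries.C ((m.choose q : ℕ) : ℝ) from by rw [map_natCast]]
    rw [MvPowerSeries.coeff_mul_C]
    ring
  rw [h2]
  set M := max m D with hM
  rw [show (∑ q ∈ Finset.range (m+1), (m.choose q : ℝ) * MvPowerSeries.coeff i ((G - 1) ^ q))
      = ∑ q ∈ Finset.range (M+1), (m.choose q : ℝ) * MvPowerSeries.coeff i ((G - 1) ^ q) from ?_]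
  · refine (Finset.sum_subset ?_ ?_).symm
    · exact Finset.range_subset_range.mpr (by omega)
    · intro q hq hq2
      rw [ezero G hc i q (by simp only [Finset.mem_range] at hq hq2 ⊢; omega)]
      ring
  · refine Finset.sum_subset (Finset.range_subset_range.mpr (by omega)) ?_
    intro q hq hq2
    rw [Nat.choose_eq_zero_of_lt (by simp only [Finset.mem_range] at hq hq2 ⊢; omega)]
    simp
end PS

-- helpers
lemma msum_apply {n : ℕ} (P : Multiset (Fin n →₀ ℕ)) (k : Fin n) :
    (P.sum) k = (P.map fun p => p k).sum := by
  induction P using Multiset.induction_on with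
  | empty => simp
  | cons p P ih => simp [ih]

lemma msum_deg {n : ℕ} (P : Multiset (Fin n →₀ ℕ)) :
    ∑ k, (P.sum) k = (P.map fun p => ∑ k, p k).sum := by
  induction P using Multiset.induction_on with
  | empty => simp
  | cons p P ih => simp [Finset.sum_add_distrib, ih]

lemma mem_le_sum {n : ℕ} {P : Multiset (Fin n →₀ ℕ)} {p : Fin n →₀ ℕ} (hp : p ∈ P) :
    p ≤ P.sum := by
  rw [← Multiset.cons_erase hp, Multiset.sum_cons]
  exact le_add_right (le_refl p)

lemma card_le_deg {n : ℕ} {P : Multiset (Fin n →₀ ℕ)} (h0 : (0 : Fin n →₀ ℕ) ∉ P) :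
    P.card ≤ ∑ k, (P.sum) k := by
  rw [msum_deg]
  have h1 : ∀ x ∈ P.map (fun p => ∑ k, p k), 1 ≤ x := by
    intro x hx
    obtain ⟨p, hp, rfl⟩ := Multiset.mem_map.mp hx
    have hps : ∑ k, p k ≠ 0 := by
      intro hz
      have hp0 : p = 0 := by
        ext k
        exact Finset.sum_eq_zero_iff.mp hz k (Finset.mem_univ k)
      exact h0 (hp0 ▸ hp)
    omega
  have := Multiset.card_nsmul_le_sum h1
  simpa using this

lemma multiset_monomial_prod {n : ℕ} (c' : (Fin n →₀ ℕ) → ℝ) (P : Multiset (Fin n →₀ ℕ)) :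
    (P.map (fun p => (MvPowerSeries.monomial p (c' p) : MvPowerSeries (Fin n) ℝ))).prod =
      MvPowerSeries.monomial P.sum ((P.map c').prod) := by
  induction P using Multiset.induction_on with
  | empty =>
      simp only [Multiset.map_zero, Multiset.prod_zero, Multiset.sum_zero]
      rw [MvPowerSeries.monomial_zero_eq_C]
      simp
  | cons p P ih =>
      simp only [Multiset.map_cons, Multiset.prod_cons, Multiset.sum_cons, ih]
      rw [MvPowerSeries.monomial_mul_monomial]

lemma mult_count {α : Type*} [DecidableEq α] (P : Multiset α) :
    ((P.card)! : ℝ)⁻¹ * (P.countPerms : ℝ) =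
      (∏ x ∈ P.toFinset, ((P.count x)! : ℝ))⁻¹ := by
  have hmn : P.countPerms = Nat.multinomial P.toFinset (fun x => P.count x) := by
    rw [Multiset.countPerms, Finsupp.multinomial_eq]
    rfl
  have hspec := Nat.multinomial_spec P.toFinset (fun x => P.count x)
  rw [Multiset.toFinset_sum_count_eq] at hspec
  have hcast : (∏ x ∈ P.toFinset, ((P.count x)! : ℝ)) * (P.countPerms : ℝ) = ((P.card)! : ℝ) := by
    rw [hmn]
    exact_mod_cast congrArg (Nat.cast : ℕ → ℝ) hspec
  have h1 : (∏ x ∈ P.toFinset, ((P.count x)! : ℝ)) ≠ 0 :=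
    Finset.prod_ne_zero_iff.mpr fun x _ => Nat.cast_ne_zero.2 (Nat.factorial_ne_zero _)
  have h2 : ((P.card)! : ℝ) ≠ 0 := Nat.cast_ne_zero.2 (Nat.factorial_ne_zero _)
  field_simp
  linarith [hcast]

lemma alg2 {n : ℕ} (g : (Fin n →₀ ℕ) → ℝ) (G H : MvPowerSeries (Fin n) ℝ) (ν : ℕ → ℝ)
    (hGdef : ∀ i : Fin n →₀ ℕ,
      MvPowerSeries.coeff i G = (∏ k, ((i k)! : ℝ))⁻¹ * g i)
    (hg0 : g 0 = 1)
    (hHdef : ∀ i : Fin n →₀ ℕ,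
      MvPowerSeries.coeff i H =
        ∑ q ∈ Finset.range ((∑ k, i k) + 1),
          ((q ! : ℝ)⁻¹) * (ν q) * MvPowerSeries.coeff i ((G - 1) ^ q))
    (i : Fin n →₀ ℕ) :
    (∏ k, ((i k)! : ℝ)) * MvPowerSeries.coeff i H =
      ∑ᶠ (P : Multiset (Fin n →₀ ℕ)) (_ : (0 : Fin n →₀ ℕ) ∉ P ∧ P.sum = i),
        ((∏ k, ((i k)! : ℝ)) /
            ((∏ x ∈ P.toFinset, ((P.count x)! : ℝ)) *
              (P.map fun p => ∏ k, ((p k)! : ℝ)).prod)) *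
          (ν P.card) * (P.map g).prod := by
  classical
  set D := ∑ k, i k with hD
  set fact : ℝ := ∏ k, ((i k)! : ℝ) with hfact
  have hc : MvPowerSeries.constantCoeff (G - 1) = 0 := by
    have h0 : MvPowerSeries.constantCoeff G = 1 := by
      rw [← MvPowerSeries.coeff_zero_eq_constantCoeff, hGdef 0]
      simp [hg0]
    rw [map_sub, h0, map_one, sub_self]
  set A : Finset (Fin n →₀ ℕ) := (Finset.Iic i).erase 0 with hA
  set c' : (Fin n →₀ ℕ) → ℝ := fun p => MvPowerSeries.coeff p (G - 1) with hc'
  set F : MvPowerSeries (Fin n) ℝ := ∑ p ∈ A, MvPowerSeries.monomial p (c' p) with hF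
  set f : Multiset (Fin n →₀ ℕ) → ℝ := fun P =>
      (fact / ((∏ x ∈ P.toFinset, ((P.count x)! : ℝ)) *
        (P.map fun p => ∏ k, ((p k)! : ℝ)).prod)) * (ν P.card) * (P.map g).prod with hf
  -- coefficients of F
  have hcoeffF : ∀ d : Fin n →₀ ℕ, MvPowerSeries.coeff d F =
      if d ∈ A then c' d else 0 := by
    intro d
    rw [hF, map_sum]
    rw [Finset.sum_congr rfl (fun p _ => MvPowerSeries.coeff_monomial d p (c' p))]
    exact Finset.sum_ite_eq A d c'
  -- M2
  have hM2 : ∀ q : ℕ, MvPowerSeries.coeff i ((G - 1) ^ q) = MvPowerSeries.coeff i (F ^ q) := by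
    intro q
    rw [MvPowerSeries.coeff_pow, MvPowerSeries.coeff_pow]
    refine Finset.sum_congr rfl fun d hd => ?_
    rw [Finset.mem_finsuppAntidiag] at hd
    refine Finset.prod_congr rfl fun l hl => ?_
    by_cases h0 : d l = 0
    · rw [h0]
      have l1 : MvPowerSeries.coeff (0 : Fin n →₀ ℕ) (G - 1) = 0 := by
        rw [MvPowerSeries.coeff_zero_eq_constantCoeff]; exact hc
      have l2 : MvPowerSeries.coeff (0 : Fin n →₀ ℕ) F = 0 := by
        rw [hcoeffF, if_neg]; simp [hA]
      rw [l1, l2]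
    · have hle : d l ≤ i := by
        rw [← hd.1]
        exact Finset.single_le_sum (f := fun l' => d l') (fun l' _ => _root_.zero_le) hl
      have hdA : d l ∈ A := Finset.mem_erase.mpr ⟨h0, Finset.mem_Iic.mpr hle⟩
      rw [hcoeffF, if_pos hdA]
  -- M4
  have hM4 : ∀ q : ℕ, MvPowerSeries.coeff i (F ^ q) =
      ∑ k ∈ (A.sym q).filter (fun k : Sym (Fin n →₀ ℕ) q => k.toMultiset.sum = i),
        (k.toMultiset.countPerms : ℝ) * (k.toMultiset.map c').prod := by
    intro q
    rw [hF, Finset.sum_pow, map_sum, Finset.sum_filter]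
    refine Finset.sum_congr rfl fun k _ => ?_
    rw [multiset_monomial_prod]
    have : ((k.val.countPerms : ℕ) : MvPowerSeries (Fin n) ℝ)
        = MvPowerSeries.C ((k.val.countPerms : ℕ) : ℝ) := by rw [map_natCast]
    rw [this, MvPowerSeries.coeff_C_mul, MvPowerSeries.coeff_monomial]
    by_cases hs : k.toMultiset.sum = i
    · simp [hs]
    · have h1 : ¬ (i = k.toMultiset.sum) := fun h => hs h.symm
      simp [hs, h1]
  -- the support set equals T
  set T : Finset (Multiset (Fin n →₀ ℕ)) := (Finset.range (D + 1)).biUnion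
      (fun q => ((A.sym q).filter
        (fun k : Sym (Fin n →₀ ℕ) q => k.toMultiset.sum = i)).image Sym.toMultiset) with hT
  have hST : {P : Multiset (Fin n →₀ ℕ) | (0 : Fin n →₀ ℕ) ∉ P ∧ P.sum = i} = ↑T := by
    ext P
    simp only [Set.mem_setOf_eq, Finset.coe_biUnion, Finset.mem_coe, Finset.mem_biUnion, hT,
      Finset.mem_image, Finset.mem_filter, Finset.mem_range, Set.mem_iUnion]
    constructor
    · rintro ⟨h0, hsum⟩
      refine ⟨P.card, ?_, Sym.mk P rfl, ⟨?_, ?_⟩, rfl⟩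
      · have := card_le_deg h0
        rw [hsum] at this
        omega
      · rw [Finset.mem_sym_iff]
        intro a ha
        have ha' : a ∈ P := ha
        refine Finset.mem_erase.mpr ⟨?_, Finset.mem_Iic.mpr ?_⟩
        · intro h; exact h0 (h ▸ ha')
        · rw [← hsum]; exact mem_le_sum ha'
      · exact hsum
    · rintro ⟨q, hq, k, ⟨hk1, hk2⟩, rfl⟩
      rw [Finset.mem_sym_iff] at hk1
      constructor
      · intro h0
        have := hk1 0 h0
        exact absurd this (by simp [hA])
      · exact hk2
  -- convert finsum to finite sum
  have hfin : (∑ᶠ (P : Multiset (Fin n →₀ ℕ)) (_ : (0 : Fin n →₀ ℕ) ∉ P ∧ P.sum = i), f P)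
      = ∑ P ∈ T, f P := by
    rw [← finsum_mem_coe_finset, ← hST]
    rfl
  rw [hfin]
  -- disjointness
  have hdisj : Set.PairwiseDisjoint ↑(Finset.range (D + 1))
      (fun q => ((A.sym q).filter
        (fun k : Sym (Fin n →₀ ℕ) q => k.toMultiset.sum = i)).image Sym.toMultiset) := by
    intro q hq q' hq' hne
    simp only [Function.onFun]
    rw [Finset.disjoint_left]
    intro P hP hP'
    obtain ⟨k, hk, rfl⟩ := Finset.mem_image.mp hP
    obtain ⟨k', hk', heq⟩ := Finset.mem_image.mp hP'
    have h1 : Multiset.card (Sym.toMultiset k) = q := k.2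
    have h2 : Multiset.card (Sym.toMultiset k') = q' := k'.2
    rw [heq] at h2
    exact hne (h1.symm.trans h2)
  rw [hT, Finset.sum_biUnion hdisj]
  rw [hHdef i, ← hD, Finset.mul_sum]
  refine Finset.sum_congr rfl fun q hq => ?_
  rw [Finset.sum_image (fun x _ y _ h => Sym.coe_injective h)]
  rw [hM2 q, hM4 q, Finset.mul_sum, Finset.mul_sum]
  refine Finset.sum_congr rfl fun k hk => ?_
  rw [Finset.mem_filter, Finset.mem_sym_iff] at hk
  have hcard : k.toMultiset.card = q := k.2
  have hP0 : (0 : Fin n →₀ ℕ) ∉ k.toMultiset := by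
    intro h0
    have := hk.1 0 h0
    simp [hA] at this
  -- M6
  have hM6 : (k.toMultiset.map c').prod =
      ((k.toMultiset.map fun p => ∏ j, ((p j)! : ℝ)).prod)⁻¹ * (k.toMultiset.map g).prod := by
    have hcong : ∀ p ∈ k.toMultiset, c' p = (fun p => (∏ j, ((p j)! : ℝ))⁻¹ * g p) p := by
      intro p hp
      have hp0 : p ≠ 0 := fun h => hP0 (h ▸ hp)
      show MvPowerSeries.coeff p (G - 1) = _
      rw [map_sub, MvPowerSeries.coeff_one, if_neg hp0, sub_zero, hGdef]
    rw [Multiset.map_congr rfl hcong]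
    rw [show (fun p => (∏ j, ((p j)! : ℝ))⁻¹ * g p)
        = fun p => (fun p => (∏ j, ((p j)! : ℝ))⁻¹) p * g p from rfl]
    rw [Multiset.prod_map_mul]
    congr 1
    exact Multiset.prod_map_inv
  have hM5 := mult_count k.toMultiset
  rw [hcard] at hM5
  rw [hM6, hf]
  simp only [hcard]
  rw [div_eq_mul_inv, mul_inv]
  set a : ℝ := ∏ x ∈ k.toMultiset.toFinset, ((k.toMultiset.count x)! : ℝ) with ha
  set b : ℝ := (k.toMultiset.map fun p => ∏ j, ((p j)! : ℝ)).prod with hb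
  set cc : ℝ := (k.toMultiset.map g).prod with hcc
  set M : ℝ := (k.toMultiset.countPerms : ℝ) with hM
  calc fact * ((q ! : ℝ)⁻¹ * ν q * (M * (b⁻¹ * cc)))
      = ((q ! : ℝ)⁻¹ * M) * (fact * ν q * b⁻¹ * cc) := by ring
    _ = a⁻¹ * (fact * ν q * b⁻¹ * cc) := by rw [hM5]
    _ = fact * (a⁻¹ * b⁻¹) * ν q * cc := by ring

theorem concl1 {n : ℕ} {Ω : Type*} [MeasurableSpace Ω] (ℙ : Measure Ω)
    [IsProbabilityMeasure ℙ]
    (Y : Ω → ℝ) (N : Ω → ℕ) (X : ℕ → Ω → Fin n → ℝ)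
    (hYmeas : Measurable Y) (hNmeas : Measurable N) (hXmeas : ∀ l, Measurable (X l))
    (hYpos : ∀ ω, 0 ≤ Y ω)
    (hYint : ∀ p : ℕ, Integrable (fun ω => Y ω ^ p) ℙ)
    (g : (Fin n →₀ ℕ) → ℝ)
    (hg : ∀ i : Fin n →₀ ℕ, g i = ∫ ω, ∏ k, X 0 ω k ^ i k ∂ℙ)
    (hmix : ∀ m : ℕ,
      (ℙ {ω | N ω = m}).toReal = ∫ ω, Real.exp (-Y ω) * Y ω ^ m / m ! ∂ℙ)
    (hXint : ∀ (m : ℕ) (j : ℕ → Fin n →₀ ℕ),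
      Integrable (fun ω => ∏ l ∈ Finset.range m, ∏ k, X l ω k ^ j l k) ℙ)
    (hfac : ∀ (m : ℕ) (j : ℕ → Fin n →₀ ℕ),
      ∫ ω in {ω | N ω = m}, ∏ l ∈ Finset.range m, ∏ k, X l ω k ^ j l k ∂ℙ =
        (ℙ {ω | N ω = m}).toReal * ∏ l ∈ Finset.range m, g (j l))
    (hSint : ∀ i : Fin n →₀ ℕ,
      Integrable (fun ω => ∏ k, (∑ l ∈ Finset.range (N ω), X l ω k) ^ i k) ℙ)
    (G H : MvPowerSeries (Fin n) ℝ)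
    (hGdef : ∀ i : Fin n →₀ ℕ,
      MvPowerSeries.coeff i G = (∏ k, ((i k)! : ℝ))⁻¹ * g i)
    (hHdef : ∀ i : Fin n →₀ ℕ,
      MvPowerSeries.coeff i H =
        ∑ q ∈ Finset.range ((∑ k, i k) + 1),
          ((q ! : ℝ)⁻¹) * (∫ ω, Y ω ^ q ∂ℙ) * MvPowerSeries.coeff i ((G - 1) ^ q)) :
    ∀ i : Fin n →₀ ℕ,
      ∫ ω, ∏ k, (∑ l ∈ Finset.range (N ω), X l ω k) ^ i k ∂ℙ =
        (∏ k, ((i k)! : ℝ)) * MvPowerSeries.coeff i H := by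
  classical
  have hg0 : g 0 = 1 := by
    rw [hg 0]
    simp
  have hc : MvPowerSeries.constantCoeff (G - 1) = 0 := by
    have h0 : MvPowerSeries.constantCoeff G = 1 := by
      rw [← MvPowerSeries.coeff_zero_eq_constantCoeff, hGdef 0]
      simp [hg0]
    rw [map_sub, h0, map_one, sub_self]
  intro i
  set D := ∑ k, i k with hD
  set fact : ℝ := ∏ k, ((i k)! : ℝ) with hfact
  -- HasSum decomposition over N = m
  have hs : ∀ m : ℕ, MeasurableSet {ω | N ω = m} := fun m =>
    hNmeas (measurableSet_singleton m)
  have hdisj : Pairwise (Function.onFun Disjoint fun m => {ω | N ω = m}) := by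
    intro m m' hne
    simp only [Function.onFun]
    rw [Set.disjoint_left]
    rintro ω h1 h2
    have h1' : N ω = m := h1
    have h2' : N ω = m' := h2
    exact hne (h1'.symm.trans h2')
  have hunion : (⋃ m : ℕ, {ω | N ω = m}) = Set.univ := by
    ext ω; simp
  have hHS := hasSum_integral_iUnion (μ := ℙ)
      (f := fun ω => ∏ k, (∑ l ∈ Finset.range (N ω), X l ω k) ^ i k)
      hs hdisj (by rw [hunion]; exact (hSint i).integrableOn)
  rw [hunion, setIntegral_univ] at hHS
  have hterm : ∀ m : ℕ,
      ∫ ω in {ω | N ω = m}, ∏ k, (∑ l ∈ Finset.range (N ω), X l ω k) ^ i k ∂ℙ =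
      ∑ q ∈ Finset.range (D + 1),
        (fact * MvPowerSeries.coeff i ((G - 1) ^ q)) *
          ((m.choose q : ℝ) * (ℙ {ω | N ω = m}).toReal) := by
    intro m
    rw [stepA ℙ N X hNmeas g hXint hfac G hGdef m i, binom G hc m i, ← hD]
    rw [Finset.mul_sum, Finset.mul_sum]
    refine Finset.sum_congr rfl fun q _ => ?_
    ring
  have hsump : ∀ q, Summable (fun m : ℕ => (m.choose q : ℝ) * (ℙ {ω | N ω = m}).toReal) :=
    fun q => (HSq ℙ Y N hYmeas hYpos hYint hmix q).summable
  have htsum := hHS.tsum_eq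
  rw [← htsum]
  calc ∑' m, ∫ ω in {ω | N ω = m}, ∏ k, (∑ l ∈ Finset.range (N ω), X l ω k) ^ i k ∂ℙ
      = ∑' m, ∑ q ∈ Finset.range (D + 1),
          (fact * MvPowerSeries.coeff i ((G - 1) ^ q)) *
            ((m.choose q : ℝ) * (ℙ {ω | N ω = m}).toReal) := by
        exact tsum_congr hterm
    _ = ∑ q ∈ Finset.range (D + 1), ∑' m : ℕ,
          (fact * MvPowerSeries.coeff i ((G - 1) ^ q)) *
            ((m.choose q : ℝ) * (ℙ {ω | N ω = m}).toReal) := by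
        refine Summable.tsum_finsetSum fun q _ => ?_
        exact (hsump q).mul_left _
    _ = ∑ q ∈ Finset.range (D + 1),
          (fact * MvPowerSeries.coeff i ((G - 1) ^ q)) *
            ((q ! : ℝ)⁻¹ * ∫ ω, Y ω ^ q ∂ℙ) := by
        refine Finset.sum_congr rfl fun q _ => ?_
        rw [tsum_mul_left, (HSq ℙ Y N hYmeas hYpos hYint hmix q).tsum_eq]
    _ = fact * MvPowerSeries.coeff i H := by
        rw [hHdef i, ← hD, Finset.mul_sum]
        refine Finset.sum_congr rfl fun q _ => ?_
        ring

/-- **Randomized compound Poisson random vector.** Let `N` be conditionally Poisson with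
random parameter `Y` (so `P(N = m) = E[e^{-Y} Y^m / m!]`), and let `X₀, X₁, ...` be
i.i.d. random vectors in `ℝⁿ`, independent of `N`, with joint moments `g i`
(expressed by the factorization hypothesis `hfac`). Then the moment EGF of the random sum
`S_N = X₀ + ⋯ + X_{N-1}` equals `f_Y(G(t) - 1)` where `f_Y(s) = E[e^{Ys}]` and `G` is the
moment EGF of `X₀` (conclusion (1), with the composition computed coefficientwise), and
consequently the `i`-th joint moment of `S_N` equals
`∑_{λ ⊨⊨ i} (i! / (m(λ)! λ!)) E[Y^{ℓ(λ)}] g_λ`, summing over the partitions `λ` of the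
multi-index `i` (conclusion (2)). -/
theorem stmt16 {n : ℕ} {Ω : Type*} [MeasurableSpace Ω] (ℙ : Measure Ω)
    [IsProbabilityMeasure ℙ]
    (Y : Ω → ℝ) (N : Ω → ℕ) (X : ℕ → Ω → Fin n → ℝ)
    (hYmeas : Measurable Y) (hNmeas : Measurable N) (hXmeas : ∀ l, Measurable (X l))
    (hYpos : ∀ ω, 0 ≤ Y ω)
    (hYint : ∀ p : ℕ, Integrable (fun ω => Y ω ^ p) ℙ)
    (g : (Fin n →₀ ℕ) → ℝ)
    (hg : ∀ i : Fin n →₀ ℕ, g i = ∫ ω, ∏ k, X 0 ω k ^ i k ∂ℙ)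
    (hmix : ∀ m : ℕ,
      (ℙ {ω | N ω = m}).toReal = ∫ ω, Real.exp (-Y ω) * Y ω ^ m / m ! ∂ℙ)
    (hXint : ∀ (m : ℕ) (j : ℕ → Fin n →₀ ℕ),
      Integrable (fun ω => ∏ l ∈ Finset.range m, ∏ k, X l ω k ^ j l k) ℙ)
    (hfac : ∀ (m : ℕ) (j : ℕ → Fin n →₀ ℕ),
      ∫ ω in {ω | N ω = m}, ∏ l ∈ Finset.range m, ∏ k, X l ω k ^ j l k ∂ℙ =
        (ℙ {ω | N ω = m}).toReal * ∏ l ∈ Finset.range m, g (j l))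
    (hSint : ∀ i : Fin n →₀ ℕ,
      Integrable (fun ω => ∏ k, (∑ l ∈ Finset.range (N ω), X l ω k) ^ i k) ℙ)
    (G H : MvPowerSeries (Fin n) ℝ)
    (hGdef : ∀ i : Fin n →₀ ℕ,
      MvPowerSeries.coeff i G = (∏ k, ((i k)! : ℝ))⁻¹ * g i)
    (hHdef : ∀ i : Fin n →₀ ℕ,
      MvPowerSeries.coeff i H =
        ∑ q ∈ Finset.range ((∑ k, i k) + 1),
          ((q ! : ℝ)⁻¹) * (∫ ω, Y ω ^ q ∂ℙ) * MvPowerSeries.coeff i ((G - 1) ^ q)) :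
    (∀ i : Fin n →₀ ℕ,
      ∫ ω, ∏ k, (∑ l ∈ Finset.range (N ω), X l ω k) ^ i k ∂ℙ =
        (∏ k, ((i k)! : ℝ)) * MvPowerSeries.coeff i H) ∧
    (∀ i : Fin n →₀ ℕ,
      ∫ ω, ∏ k, (∑ l ∈ Finset.range (N ω), X l ω k) ^ i k ∂ℙ =
        ∑ᶠ (P : Multiset (Fin n →₀ ℕ)) (_ : (0 : Fin n →₀ ℕ) ∉ P ∧ P.sum = i),
          ((∏ k, ((i k)! : ℝ)) /
              ((∏ x ∈ P.toFinset, ((P.count x)! : ℝ)) *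
                (P.map fun p => ∏ k, ((p k)! : ℝ)).prod)) *
            (∫ ω, Y ω ^ P.card ∂ℙ) * (P.map g).prod) := by
  have hg0 : g 0 = 1 := by
    rw [hg 0]
    simp
  have part1 := concl1 ℙ Y N X hYmeas hNmeas hXmeas hYpos hYint g hg hmix hXint hfac hSint
    G H hGdef hHdef
  refine ⟨part1, fun i => ?_⟩
  rw [part1 i]
  exact alg2 g G H (fun q => ∫ ω, Y ω ^ q ∂ℙ) hGdef hg0 hHdef i
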